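/- Let ψ_c : (0,∞) → (0,∞) be a continuous, strictly increasing function with ψ_c(γ) → 0 as γ → 0⁺ and ψ_c(γ) → ∞ as γ → ∞, and let q > 0. Define F_L(γ) = 1 − Γ(L, qL·ψ_c(γ))/Γ(L). Then for every γ > 0, lim_{L→∞} F_L(γ) = 0 if ψ_c(γ) < 1/q and lim_{L→∞} F_L(γ) = 1 if ψ_c(γ) > 1/q; hence F_L converges pointwise (at continuity points) to the CDF of the constant ψ_c^{−1}(1/q). -/

import Mathlib

open Filter MeasureTheory


/-- Upper incomplete gamma function `Γ(L, x) = ∫_x^∞ t^(L-1) e^(-t) dt` for positive integer `L`. -/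
noncomputable def uGamma (L : ℕ) (x : ℝ) : ℝ :=
  ∫ t in Set.Ioi x, t ^ (L - 1) * Real.exp (-t)

lemma aux_integrableOn (n : ℕ) {x : ℝ} (hx : 0 ≤ x) :
    IntegrableOn (fun t : ℝ => t ^ n * Real.exp (-t)) (Set.Ioi x) := by
  have h := Real.GammaIntegral_convergent (s := (n + 1 : ℝ)) (by positivity)
  have h2 : IntegrableOn (fun t : ℝ => t ^ n * Real.exp (-t)) (Set.Ioi 0) := by
    refine h.congr_fun (fun t ht => ?_) measurableSet_Ioi
    beta_reduce
    rw [show ((n : ℝ) + 1) - 1 = (n : ℝ) by ring, Real.rpow_natCast]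
    ring
  exact h2.mono_set (Set.Ioi_subset_Ioi hx)

lemma uGamma_zero {L : ℕ} (hL : 1 ≤ L) : uGamma L 0 = (L - 1).factorial := by
  have h1 : Real.Gamma (((L - 1 : ℕ) : ℝ) + 1) = (L - 1).factorial :=
    Real.Gamma_nat_eq_factorial _
  rw [Real.Gamma_eq_integral (by positivity)] at h1
  rw [uGamma, ← h1]
  refine MeasureTheory.setIntegral_congr_fun measurableSet_Ioi (fun t ht => ?_)
  rw [show (((L - 1 : ℕ) : ℝ) + 1) - 1 = ((L - 1 : ℕ) : ℝ) by ring, Real.rpow_natCast]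
  ring

lemma uGamma_nonneg (L : ℕ) {x : ℝ} (hx : 0 ≤ x) : 0 ≤ uGamma L x :=
  MeasureTheory.setIntegral_nonneg measurableSet_Ioi fun t ht => by
    have h : 0 < t := lt_of_le_of_lt hx ht
    positivity

lemma uGamma_split (L : ℕ) {x : ℝ} (hx : 0 ≤ x) :
    uGamma L 0 = (∫ t in Set.Ioc 0 x, t ^ (L - 1) * Real.exp (-t)) + uGamma L x := by
  rw [uGamma, uGamma, ← Set.Ioc_union_Ioi_eq_Ioi hx]
  exact MeasureTheory.setIntegral_union (Set.Ioc_disjoint_Ioi le_rfl) measurableSet_Ioi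
    ((aux_integrableOn (L - 1) le_rfl).mono_set Set.Ioc_subset_Ioi_self)
    (aux_integrableOn (L - 1) hx)


lemma pow_exp_mono (n : ℕ) {s t : ℝ} (hs : 0 < s) (hst : s ≤ t) (htn : t ≤ n) :
    s ^ n * Real.exp (-s) ≤ t ^ n * Real.exp (-t) := by
  have ht : 0 < t := hs.trans_le hst
  have hlog : Real.log s - Real.log t ≤ s / t - 1 := by
    have := Real.log_le_sub_one_of_pos (div_pos hs ht)
    rwa [Real.log_div hs.ne' ht.ne'] at this
  have h2 : (n : ℝ) * (s / t - 1) ≤ s - t := by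
    have h3 : (n : ℝ) * (s / t - 1) = (n : ℝ) * (s - t) / t := by field_simp
    rw [h3, div_le_iff₀ ht]
    nlinarith [mul_nonneg (sub_nonneg.2 hst) (sub_nonneg.2 htn)]
  have key : (n : ℝ) * Real.log s + (-s) ≤ (n : ℝ) * Real.log t + (-t) := by
    nlinarith [mul_le_mul_of_nonneg_left hlog (Nat.cast_nonneg (α := ℝ) n)]
  calc s ^ n * Real.exp (-s)
      = Real.exp ((n : ℝ) * Real.log s + (-s)) := by
        rw [Real.exp_add, Real.exp_nat_mul, Real.exp_log hs]
    _ ≤ Real.exp ((n : ℝ) * Real.log t + (-t)) := Real.exp_le_exp.2 key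
    _ = t ^ n * Real.exp (-t) := by
        rw [Real.exp_add, Real.exp_nat_mul, Real.exp_log ht]

lemma mul_exp_le {c : ℝ} (hc : 0 < c) {t : ℝ} (ht : 0 ≤ t) :
    t * Real.exp (-(t / c)) ≤ c / Real.exp 1 := by
  have hexp : t / c ≤ Real.exp (t / c) / Real.exp 1 := by
    have h := Real.add_one_le_exp (t / c - 1)
    rw [Real.exp_sub] at h
    linarith
  have h1 : t ≤ c / Real.exp 1 * Real.exp (t / c) := by
    have := mul_le_mul_of_nonneg_left hexp hc.le
    calc t = c * (t / c) := by field_simp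
      _ ≤ c * (Real.exp (t / c) / Real.exp 1) := this
      _ = c / Real.exp 1 * Real.exp (t / c) := by ring
  calc t * Real.exp (-(t / c)) ≤ (c / Real.exp 1 * Real.exp (t / c)) * Real.exp (-(t / c)) := by
        apply mul_le_mul_of_nonneg_right h1 (Real.exp_pos _).le
    _ = c / Real.exp 1 * Real.exp (t / c + -(t / c)) := by rw [Real.exp_add]; ring
    _ = c / Real.exp 1 := by simp

lemma integral_exp_neg_mul_Ioi {δ : ℝ} (hδ : 0 < δ) (c : ℝ) :
    ∫ t in Set.Ioi c, Real.exp (-(δ * t)) = Real.exp (-(δ * c)) / δ := by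
  have hderiv : ∀ x ∈ Set.Ici c,
      HasDerivAt (fun t : ℝ => -Real.exp (-(δ * t)) / δ) (Real.exp (-(δ * x))) x := by
    intro x _
    have h1 : HasDerivAt (fun t : ℝ => -(δ * t)) (-δ) x := by
      simpa using ((hasDerivAt_id x).const_mul δ).fun_neg
    have h2 := (h1.exp).fun_neg.div_const δ
    refine h2.congr_deriv ?_
    field_simp
  have hint : IntegrableOn (fun t : ℝ => Real.exp (-(δ * t))) (Set.Ioi c) := by
    simpa [neg_mul] using exp_neg_integrableOn_Ioi c hδ
  have htend : Tendsto (fun t : ℝ => -Real.exp (-(δ * t)) / δ) atTop (nhds 0) := by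
    have h3 : Tendsto (fun t : ℝ => -(δ * t)) atTop atBot := by
      exact tendsto_neg_atTop_atBot.comp (tendsto_id.const_mul_atTop hδ (f := fun t : ℝ => t))
    have h4 : Tendsto (fun t : ℝ => Real.exp (-(δ * t))) atTop (nhds 0) :=
      Real.tendsto_exp_atBot.comp h3
    simpa using (h4.neg.div_const δ)
  have := MeasureTheory.integral_Ioi_of_hasDerivAt_of_tendsto' hderiv hint htend
  rw [this]
  field_simp
  ring


lemma pow_pred_le_exp_mul_factorial {L : ℕ} (hL : 1 ≤ L) :
    (L : ℝ) ^ (L - 1) ≤ Real.exp L * (L - 1).factorial := by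
  have hLpos : (0 : ℝ) < L := by exact_mod_cast hL
  have h0 : (L : ℝ) ^ L ≤ Real.exp L * L.factorial := by
    have hs := Real.sum_le_exp_of_nonneg (Nat.cast_nonneg (α := ℝ) L) (L + 1)
    have h1 : (L : ℝ) ^ L / L.factorial ≤ Real.exp L :=
      le_trans (Finset.single_le_sum (f := fun i => (L : ℝ) ^ i / i.factorial)
        (fun i _ => by positivity) (Finset.self_mem_range_succ L)) hs
    rwa [div_le_iff₀ (by positivity)] at h1
  have hfac : (L.factorial : ℝ) = L * (L - 1).factorial := by
    rw [← Nat.cast_mul, Nat.mul_factorial_pred (by omega)]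
  have hpow : (L : ℝ) ^ L = (L : ℝ) ^ (L - 1) * L := by
    have h := pow_succ (L : ℝ) (L - 1)
    rwa [Nat.sub_add_cancel hL] at h
  have h0' : (L : ℝ) ^ (L - 1) * L ≤ (Real.exp L * (L - 1).factorial) * L := by
    calc (L : ℝ) ^ (L - 1) * L = (L : ℝ) ^ L := hpow.symm
      _ ≤ Real.exp L * L.factorial := h0
      _ = (Real.exp L * (L - 1).factorial) * L := by rw [hfac]; ring
  exact le_of_mul_le_mul_right h0' hLpos

lemma geom_lt_one {a : ℝ} (ha : 0 < a) (hne : a ≠ 1) : a * Real.exp (1 - a) < 1 := by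
  have h := Real.log_lt_sub_one_of_pos ha hne
  have heq : a * Real.exp (1 - a) = Real.exp (Real.log a + (1 - a)) := by
    rw [Real.exp_add, Real.exp_log ha]
  rw [heq, Real.exp_lt_one_iff]
  linarith

lemma tendsto_mul_geom {b : ℝ} (hb0 : 0 < b) (hb1 : b < 1) :
    Tendsto (fun L : ℕ => (L : ℝ) * b ^ L) atTop (nhds 0) := by
  have hsum : Summable (fun n : ℕ => (n : ℝ) ^ 1 * b ^ n) :=
    summable_pow_mul_geometric_of_norm_lt_one 1
      (by rwa [Real.norm_eq_abs, abs_of_pos hb0])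
  simpa using hsum.tendsto_atTop_zero

lemma one_sub_ratio_tendsto_zero {a : ℝ} (ha0 : 0 < a) (ha1 : a < 1) :
    Tendsto (fun L : ℕ => 1 - uGamma L (a * L) / uGamma L 0) atTop (nhds 0) := by
  set b : ℝ := a * Real.exp (1 - a) with hbdef
  have hb0 : 0 < b := by positivity
  have hb1 : b < 1 := geom_lt_one ha0 (ne_of_lt ha1)
  obtain ⟨N, hN⟩ := exists_nat_ge (1 / (1 - a))
  have hev : ∀ᶠ L : ℕ in atTop, 1 ≤ L ∧ a * L ≤ (L : ℝ) - 1 := by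
    filter_upwards [eventually_ge_atTop 1, eventually_ge_atTop N] with L h1 h2
    refine ⟨h1, ?_⟩
    have hLN : (N : ℝ) ≤ L := by exact_mod_cast h2
    have h3 : 1 / (1 - a) ≤ (L : ℝ) := le_trans hN hLN
    have h4 : 1 ≤ (1 - a) * L := by
      rw [div_le_iff₀ (by linarith : (0:ℝ) < 1 - a)] at h3
      linarith
    nlinarith
  refine tendsto_of_tendsto_of_tendsto_of_le_of_le' tendsto_const_nhds
    (tendsto_mul_geom hb0 hb1) ?_ ?_
  · filter_upwards [hev] with L hL
    obtain ⟨hL1, _⟩ := hL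
    have hF : uGamma L 0 = (L - 1).factorial := uGamma_zero hL1
    have hFpos : (0 : ℝ) < (L - 1).factorial := by exact_mod_cast (L - 1).factorial_pos
    have hsplit := uGamma_split L (x := a * L) (by positivity)
    have hI : 0 ≤ ∫ t in Set.Ioc 0 (a * L), t ^ (L - 1) * Real.exp (-t) :=
      MeasureTheory.setIntegral_nonneg measurableSet_Ioc fun t ht => by
        have := ht.1; positivity
    have hle : uGamma L (a * L) ≤ uGamma L 0 := by linarith
    rw [sub_nonneg, hF, div_le_one hFpos, ← hF]
    exact hle
  · filter_upwards [hev] with L hL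
    obtain ⟨hL1, hal⟩ := hL
    have hL1' : (1 : ℝ) ≤ L := by exact_mod_cast hL1
    have hLpos : (0 : ℝ) < L := lt_of_lt_of_le one_pos hL1'
    set n := L - 1 with hn
    have hnc : (n : ℝ) = (L : ℝ) - 1 := by
      rw [hn, Nat.cast_sub hL1, Nat.cast_one]
    set x : ℝ := a * L with hx
    have hx0 : 0 < x := by positivity
    have hF : uGamma L 0 = (L - 1).factorial := uGamma_zero hL1
    have hFpos : (0 : ℝ) < (L - 1).factorial := by exact_mod_cast (L - 1).factorial_pos
    have hsplit := uGamma_split L (x := x) hx0.le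
    -- 1 - ratio = I / F
    have hratio : 1 - uGamma L x / uGamma L 0
        = (∫ t in Set.Ioc 0 x, t ^ n * Real.exp (-t)) / (L - 1).factorial := by
      rw [hF] at hsplit ⊢
      field_simp
      linarith
    rw [hratio, div_le_iff₀ hFpos]
    -- bound the integral
    have hIbound : (∫ t in Set.Ioc 0 x, t ^ n * Real.exp (-t))
        ≤ (x ^ n * Real.exp (-x)) * x := by
      have hint1 : IntegrableOn (fun t : ℝ => t ^ n * Real.exp (-t)) (Set.Ioc 0 x) :=
        (aux_integrableOn n le_rfl).mono_set Set.Ioc_subset_Ioi_self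
      have hint2 : IntegrableOn (fun _ : ℝ => x ^ n * Real.exp (-x)) (Set.Ioc 0 x) :=
        integrableOn_const measure_Ioc_lt_top.ne
      have hmono := MeasureTheory.setIntegral_mono_on hint1 hint2 measurableSet_Ioc
        (fun t ht => pow_exp_mono n ht.1 ht.2 (by rw [hnc]; linarith))
      refine le_trans hmono ?_
      rw [MeasureTheory.setIntegral_const, measureReal_def, Real.volume_Ioc, smul_eq_mul]
      rw [ENNReal.toReal_ofReal (by linarith)]
      ring_nf
      exact le_refl _
    refine le_trans hIbound ?_
    -- algebra: x^n * exp(-x) * x = (a^L * L * exp(-(a*L))) * L^n ≤ ... = L * b^L * F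
    have hLn : (L : ℝ) ^ n ≤ Real.exp L * (L - 1).factorial := pow_pred_le_exp_mul_factorial hL1
    have hLsucc : n + 1 = L := Nat.sub_add_cancel hL1
    have e1 : x ^ n * Real.exp (-x) * x = (a ^ L * L * Real.exp (-(a * L))) * (L : ℝ) ^ n := by
      rw [hx, mul_pow, ← hLsucc]
      ring
    have e2 : (a ^ L * L * Real.exp (-(a * L))) * (Real.exp L * (L - 1).factorial)
        = ((L : ℝ) * b ^ L) * (L - 1).factorial := by
      rw [hbdef, mul_pow, ← Real.exp_nat_mul]
      rw [show (L : ℝ) * (1 - a) = -(a * L) + L by ring, Real.exp_add]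
      ring
    rw [e1, ← e2]
    have hcoef : (0 : ℝ) ≤ a ^ L * L * Real.exp (-(a * L)) := by positivity
    exact mul_le_mul_of_nonneg_left hLn hcoef

lemma ratio_tendsto_zero {a : ℝ} (ha : 1 < a) :
    Tendsto (fun L : ℕ => uGamma L (a * L) / uGamma L 0) atTop (nhds 0) := by
  have ha0 : 0 < a := lt_trans one_pos ha
  set δ : ℝ := 1 - 1 / a with hδdef
  have hδ : 0 < δ := by
    have h1 : 1 / a < 1 := by rw [div_lt_one ha0]; exact ha
    rw [hδdef]; linarith
  set b : ℝ := a * Real.exp (1 - a) with hbdef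
  have hb0 : 0 < b := by positivity
  have hb1 : b < 1 := geom_lt_one ha0 (ne_of_gt ha)
  have hgeom : Tendsto (fun L : ℕ => (Real.exp 1 / (a * δ)) * b ^ L) atTop (nhds 0) := by
    simpa using (tendsto_pow_atTop_nhds_zero_of_lt_one hb0.le hb1).const_mul
      (Real.exp 1 / (a * δ))
  refine tendsto_of_tendsto_of_tendsto_of_le_of_le' tendsto_const_nhds hgeom ?_ ?_
  · filter_upwards with L
    exact div_nonneg (uGamma_nonneg L (by positivity)) (uGamma_nonneg L le_rfl)
  · filter_upwards [eventually_ge_atTop 1] with L hL1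
    have hL1' : (1 : ℝ) ≤ L := by exact_mod_cast hL1
    have hLpos : (0 : ℝ) < L := lt_of_lt_of_le one_pos hL1'
    set n := L - 1 with hn
    have hnc : (n : ℝ) = (L : ℝ) - 1 := by
      rw [hn, Nat.cast_sub hL1, Nat.cast_one]
    have hLsucc : n + 1 = L := Nat.sub_add_cancel hL1
    set c : ℝ := a * L with hc
    have hc0 : 0 < c := by positivity
    -- pointwise bound on Ioi c
    have hpt : ∀ t ∈ Set.Ioi c,
        t ^ n * Real.exp (-t) ≤ (c / Real.exp 1) ^ n * Real.exp (-(δ * t)) := by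
      intro t ht
      have ht0 : 0 < t := lt_trans hc0 ht
      have heq : (t * Real.exp (-(t / c))) ^ n * Real.exp (-(t * (1 - n / c)))
          = t ^ n * Real.exp (-t) := by
        rw [mul_pow, ← Real.exp_nat_mul, mul_assoc, ← Real.exp_add]
        congr 1
        congr 1
        field_simp
        ring
      rw [← heq]
      have h1 : (t * Real.exp (-(t / c))) ^ n ≤ (c / Real.exp 1) ^ n :=
        pow_le_pow_left₀ (by positivity) (mul_exp_le hc0 ht0.le) n
      have h2 : Real.exp (-(t * (1 - n / c))) ≤ Real.exp (-(δ * t)) := by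
        rw [Real.exp_le_exp, neg_le_neg_iff]
        have hnc2 : (n : ℝ) / c ≤ 1 / a := by
          rw [div_le_div_iff₀ hc0 ha0, hnc]
          nlinarith
        have h3 : δ ≤ 1 - (n : ℝ) / c := by rw [hδdef]; linarith
        nlinarith
      exact mul_le_mul h1 h2 (Real.exp_pos _).le (by positivity)
    -- integral bound
    have hstep : uGamma L c ≤ (c / Real.exp 1) ^ n * (Real.exp (-(δ * c)) / δ) := by
      have hint1 : IntegrableOn (fun t : ℝ => t ^ n * Real.exp (-t)) (Set.Ioi c) :=
        aux_integrableOn n hc0.le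
      have hint2 : IntegrableOn
          (fun t : ℝ => (c / Real.exp 1) ^ n * Real.exp (-(δ * t))) (Set.Ioi c) := by
        refine Integrable.const_mul ?_ _
        simpa [neg_mul, IntegrableOn] using exp_neg_integrableOn_Ioi c hδ
      have hmono := MeasureTheory.setIntegral_mono_on hint1 hint2 measurableSet_Ioi hpt
      rw [uGamma]
      refine le_trans hmono ?_
      rw [MeasureTheory.integral_const_mul, integral_exp_neg_mul_Ioi hδ c]
    have hF : uGamma L 0 = (L - 1).factorial := uGamma_zero hL1
    have hFpos : (0 : ℝ) < (L - 1).factorial := by exact_mod_cast (L - 1).factorial_pos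
    rw [hF, div_le_iff₀ hFpos]
    refine le_trans hstep ?_
    -- key equality and factorial bound
    have hLn : (L : ℝ) ^ n ≤ Real.exp L * (L - 1).factorial := pow_pred_le_exp_mul_factorial hL1
    have hδc : δ * c = a * (L : ℝ) - L := by
      rw [hδdef, hc]; field_simp
    have key : Real.exp (-(δ * c)) * Real.exp (L : ℝ)
        = Real.exp 1 * Real.exp ((L : ℝ) * (1 - a)) * Real.exp ((n : ℝ)) := by
      rw [← Real.exp_add, ← Real.exp_add, ← Real.exp_add]
      congr 1
      rw [hδc, hnc]
      ring
    have keyE : Real.exp (-(δ * c)) = Real.exp 1 * Real.exp ((L : ℝ) * (1 - a))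
        * Real.exp ((n : ℝ)) / Real.exp ((L : ℝ)) := by
      rw [eq_div_iff (Real.exp_ne_zero _)]
      exact key
    have hcn : c ^ n = a ^ n * (L : ℝ) ^ n := by rw [hc, mul_pow]
    have haL : a ^ L = a ^ n * a := by rw [← hLsucc, pow_succ]
    have keyeq : (c / Real.exp 1) ^ n * (Real.exp (-(δ * c)) / δ)
        = (Real.exp 1 / (a * δ)) * b ^ L * ((L : ℝ) ^ n / Real.exp (L : ℝ)) := by
      rw [hbdef, mul_pow, ← Real.exp_nat_mul, div_pow, Real.exp_one_pow, hcn, haL, keyE]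
      have hne1 : Real.exp ((n : ℝ)) ≠ 0 := Real.exp_ne_zero _
      have hne2 : Real.exp ((L : ℝ)) ≠ 0 := Real.exp_ne_zero _
      field_simp
    rw [keyeq]
    have hcoef : (0 : ℝ) ≤ Real.exp 1 / (a * δ) * b ^ L := by positivity
    calc Real.exp 1 / (a * δ) * b ^ L * ((L : ℝ) ^ n / Real.exp (L : ℝ))
        ≤ Real.exp 1 / (a * δ) * b ^ L * (L - 1).factorial := by
          refine mul_le_mul_of_nonneg_left ?_ hcoef
          rw [div_le_iff₀ (Real.exp_pos _)]
          linarith [hLn]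
      _ = Real.exp 1 / (a * δ) * b ^ L * (L - 1).factorial := rfl

theorem sinr_cdf_limit_antenna_scaling (q : ℝ) (hq : 0 < q)
    (ψc : ℝ → ℝ)
    (hcont : ContinuousOn ψc (Set.Ioi 0))
    (hmono : StrictMonoOn ψc (Set.Ioi 0))
    (hpos : ∀ γ > 0, 0 < ψc γ)
    (h0 : Tendsto ψc (nhdsWithin 0 (Set.Ioi 0)) (nhds 0))
    (htop : Tendsto ψc atTop atTop) :
    ∀ γ > 0,
      (ψc γ < 1 / q →
        Tendsto (fun L : ℕ => 1 - uGamma L (q * L * ψc γ) / uGamma L 0) atTop (nhds 0)) ∧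
      (1 / q < ψc γ →
        Tendsto (fun L : ℕ => 1 - uGamma L (q * L * ψc γ) / uGamma L 0) atTop (nhds 1)) := by
  intro γ hγ
  have hψ : 0 < ψc γ := hpos γ hγ
  have hfun : (fun L : ℕ => 1 - uGamma L (q * L * ψc γ) / uGamma L 0)
      = (fun L : ℕ => 1 - uGamma L ((q * ψc γ) * L) / uGamma L 0) := by
    funext L
    congr 2
    ring_nf
  constructor
  · intro h
    have ha1 : q * ψc γ < 1 := by
      rw [lt_div_iff₀ hq] at h
      linarith
    have ha0 : 0 < q * ψc γ := by positivity
    rw [hfun]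
    exact one_sub_ratio_tendsto_zero ha0 ha1
  · intro h
    have ha1 : 1 < q * ψc γ := by
      rw [div_lt_iff₀ hq] at h
      linarith
    have hR := ratio_tendsto_zero ha1
    rw [hfun]
    simpa using (tendsto_const_nhds (x := (1 : ℝ)) (f := atTop (α := ℕ))).sub hR
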